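/- If A = B = {(1-d)/2, (1+d)/2} ⊆ ℚ with integer d ≥ 3, and the product set A·B (possibly with 0 adjoined) forms an arithmetic progression in ℚ, then d = 3 and A = B = {-1, 2}. -/
import Mathlib

open Finset Pointwise

lemma abs_le_gap (e : ℚ) (i k : ℕ) (c : ℚ)
    (hc : c = ((k : ℚ) - (i : ℚ)) * e) (hpos : 0 < c) : |e| ≤ c := by
  have hne : ((k : ℚ) - (i : ℚ)) ≠ 0 := by
    intro h; rw [h, zero_mul] at hc; linarith
  have hz : ((k : ℤ) - (i : ℤ)) ≠ 0 := by
    intro h; apply hne; push_cast [sub_eq_zero] at h ⊢; exact_mod_cast h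
  have h1 : (1 : ℤ) ≤ |(k : ℤ) - (i : ℤ)| := Int.one_le_abs hz
  have h1' : (1 : ℚ) ≤ |(k : ℚ) - (i : ℚ)| := by
    have := (@Int.cast_le ℚ _ _ _).mpr h1
    push_cast at this
    exact this
  have : |e| = 1 * |e| := by ring
  rw [this]
  calc 1 * |e| ≤ |(k : ℚ) - (i : ℚ)| * |e| := by
        apply mul_le_mul_of_nonneg_right h1' (abs_nonneg e)
    _ = |c| := by rw [hc, abs_mul]
    _ = c := abs_of_pos hpos

lemma gap_le (e : ℚ) (i k n : ℕ) (hi : i < n) (hk : k < n) (c : ℚ)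
    (hc : c = ((k : ℚ) - (i : ℚ)) * e) (hpos : 0 ≤ c) :
    c ≤ ((n : ℚ) - 1) * |e| := by
  have h1 : |(k : ℤ) - (i : ℤ)| ≤ (n : ℤ) - 1 := by
    rw [abs_le]; omega
  have h1' : |(k : ℚ) - (i : ℚ)| ≤ (n : ℚ) - 1 := by
    have := (@Int.cast_le ℚ _ _ _).mpr h1
    push_cast at this
    exact this
  calc c = |c| := (abs_of_nonneg hpos).symm
    _ = |(k : ℚ) - (i : ℚ)| * |e| := by rw [hc, abs_mul]
    _ ≤ ((n : ℚ) - 1) * |e| := mul_le_mul_of_nonneg_right h1' (abs_nonneg e)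

lemma ap_inj (a e : ℚ) (he : e ≠ 0) :
    Function.Injective (fun i : ℕ => a + (i : ℚ) * e) := by
  intro i j hij
  have hij' : (i : ℚ) * e = (j : ℚ) * e := add_left_cancel hij
  have : (i : ℚ) = j := mul_right_cancel₀ he hij'
  exact_mod_cast this

lemma ap3 (a e : ℚ) (n : ℕ) (p q r : ℚ)
    (h : ({p, q, r} : Finset ℚ) = (range n).image (fun i : ℕ => a + (i : ℚ) * e))
    (h1 : p < q) (h2 : q < r) : q - p = r - q := by
  have hp : p ∈ (range n).image (fun i : ℕ => a + (i : ℚ) * e) := by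
    rw [← h]; simp
  have hq : q ∈ (range n).image (fun i : ℕ => a + (i : ℚ) * e) := by
    rw [← h]; simp
  have hr : r ∈ (range n).image (fun i : ℕ => a + (i : ℚ) * e) := by
    rw [← h]; simp
  rw [Finset.mem_image] at hp hq hr
  obtain ⟨i, hi, hpe⟩ := hp
  obtain ⟨j, hj, hqe⟩ := hq
  obtain ⟨k, hk, hre⟩ := hr
  rw [Finset.mem_range] at hi hj hk
  have he : e ≠ 0 := by
    intro he; rw [he] at hpe hqe; simp at hpe hqe; rw [← hpe, ← hqe] at h1
    exact lt_irrefl _ h1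
  have hcard : ({p, q, r} : Finset ℚ).card = 3 :=
    Finset.card_eq_three.mpr ⟨p, q, r, ne_of_lt h1, ne_of_lt (h1.trans h2),
      ne_of_lt h2, rfl⟩
  have hn : n = 3 := by
    have := Finset.card_image_of_injective (range n) (ap_inj a e he)
    rw [← h, hcard, Finset.card_range] at this
    omega
  subst hn
  have g1 : q - p = ((j : ℚ) - (i : ℚ)) * e := by rw [← hqe, ← hpe]; ring
  have g2 : r - q = ((k : ℚ) - (j : ℚ)) * e := by rw [← hre, ← hqe]; ring
  have g3 : r - p = ((k : ℚ) - (i : ℚ)) * e := by rw [← hre, ← hpe]; ring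
  have b1 := abs_le_gap e i j _ g1 (by linarith)
  have b2 := abs_le_gap e j k _ g2 (by linarith)
  have b3 := gap_le e i k 3 hi hk _ g3 (by linarith)
  norm_num at b3
  linarith

lemma ap4 (a e : ℚ) (n : ℕ) (p q r s : ℚ)
    (h : ({p, q, r, s} : Finset ℚ) = (range n).image (fun i : ℕ => a + (i : ℚ) * e))
    (h1 : p < q) (h2 : q < r) (h3 : r < s) : r - q = s - r := by
  have hp : p ∈ (range n).image (fun i : ℕ => a + (i : ℚ) * e) := by
    rw [← h]; simp
  have hq : q ∈ (range n).image (fun i : ℕ => a + (i : ℚ) * e) := by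
    rw [← h]; simp
  have hr : r ∈ (range n).image (fun i : ℕ => a + (i : ℚ) * e) := by
    rw [← h]; simp
  have hs : s ∈ (range n).image (fun i : ℕ => a + (i : ℚ) * e) := by
    rw [← h]; simp
  rw [Finset.mem_image] at hp hq hr hs
  obtain ⟨i, hi, hpe⟩ := hp
  obtain ⟨j, hj, hqe⟩ := hq
  obtain ⟨k, hk, hre⟩ := hr
  obtain ⟨l, hl, hse⟩ := hs
  rw [Finset.mem_range] at hi hj hk hl
  have he : e ≠ 0 := by
    intro he; rw [he] at hpe hqe; simp at hpe hqe; rw [← hpe, ← hqe] at h1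
    exact lt_irrefl _ h1
  have hcard : ({p, q, r, s} : Finset ℚ).card = 4 := by
    rw [Finset.card_insert_of_notMem
          (by simp; refine ⟨?_, ?_, ?_⟩ <;> intro hh <;> subst hh <;> linarith),
        Finset.card_insert_of_notMem
          (by simp; refine ⟨?_, ?_⟩ <;> intro hh <;> subst hh <;> linarith),
        Finset.card_insert_of_notMem (by simp; intro hh; subst hh; linarith),
        Finset.card_singleton]
  have hn : n = 4 := by
    have := Finset.card_image_of_injective (range n) (ap_inj a e he)
    rw [← h, hcard, Finset.card_range] at this
    omega
  subst hn
  have g1 : q - p = ((j : ℚ) - (i : ℚ)) * e := by rw [← hqe, ← hpe]; ring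
  have g2 : r - q = ((k : ℚ) - (j : ℚ)) * e := by rw [← hre, ← hqe]; ring
  have g3 : s - r = ((l : ℚ) - (k : ℚ)) * e := by rw [← hse, ← hre]; ring
  have g4 : s - p = ((l : ℚ) - (i : ℚ)) * e := by rw [← hse, ← hpe]; ring
  have b1 := abs_le_gap e i j _ g1 (by linarith)
  have b2 := abs_le_gap e j k _ g2 (by linarith)
  have b3 := abs_le_gap e k l _ g3 (by linarith)
  have b4 := gap_le e i l 4 hi hl _ g4 (by linarith)
  norm_num at b4
  linarith

/-- If A = B = {(1-d)/2, (1+d)/2} with d ≥ 3 an integer and A·B (possibly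
with 0 adjoined) is an arithmetic progression in ℚ, then d = 3 and
A = B = {-1, 2}. -/
theorem progression_product_d_eq_three
    (d : ℤ) (hd : 3 ≤ d)
    (A B : Finset ℚ)
    (hA : A = ({((1 : ℚ) - d) / 2, ((1 : ℚ) + d) / 2} : Finset ℚ))
    (hB : B = ({((1 : ℚ) - d) / 2, ((1 : ℚ) + d) / 2} : Finset ℚ))
    (hAP : (∃ (a e : ℚ) (n : ℕ),
              A * B = (Finset.range n).image (fun i : ℕ => a + (i : ℚ) * e)) ∨
           (∃ (a e : ℚ) (n : ℕ),
              insert (0 : ℚ) (A * B) =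
                (Finset.range n).image (fun i : ℕ => a + (i : ℚ) * e))) :
    d = 3 ∧ A = ({-1, 2} : Finset ℚ) ∧ B = ({-1, 2} : Finset ℚ) := by
  have hD : (3 : ℚ) ≤ (d : ℚ) := by exact_mod_cast hd
  set u : ℚ := ((1 : ℚ) - d) / 2 with hu
  set v : ℚ := ((1 : ℚ) + d) / 2 with hv
  have hS : A * B = ({u * v, u * u, v * v} : Finset ℚ) := by
    subst hA hB
    ext t
    simp only [Finset.mem_mul, Finset.mem_insert, Finset.mem_singleton]
    constructor
    · rintro ⟨x, (rfl | rfl), y, (rfl | rfl), rfl⟩ <;> simp [mul_comm]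
    · rintro (rfl | rfl | rfl)
      · exact ⟨_, Or.inl rfl, _, Or.inr rfl, rfl⟩
      · exact ⟨_, Or.inl rfl, _, Or.inl rfl, rfl⟩
      · exact ⟨_, Or.inr rfl, _, Or.inr rfl, rfl⟩
  have hp0 : u * v < 0 := by
    rw [hu, hv]; nlinarith
  have h0q : (0 : ℚ) < u * u := by
    rw [hu]; nlinarith
  have hpq : u * v < u * u := by linarith
  have hqr : u * u < v * v := by
    rw [hu, hv]; nlinarith
  have hd3 : d = 3 := by
    rcases hAP with ⟨a, e, n, hap⟩ | ⟨a, e, n, hap⟩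
    · rw [hS] at hap
      have key := ap3 a e n _ _ _ hap hpq hqr
      -- u*u - u*v = v*v - u*u  gives  d*(d-3) = 0
      have hz : ((d : ℚ) - 3) * (d : ℚ) = 0 := by
        rw [hu, hv] at key; linear_combination 2 * key
      rcases mul_eq_zero.mp hz with hz | hz
      · have : (d : ℚ) = 3 := by linarith
        exact_mod_cast this
      · linarith
    · rw [hS] at hap
      have hre : insert (0 : ℚ) ({u * v, u * u, v * v} : Finset ℚ) =
          ({u * v, 0, u * u, v * v} : Finset ℚ) := by
        ext t
        simp only [Finset.mem_insert, Finset.mem_singleton]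
        tauto
      rw [hre] at hap
      have key := ap4 a e n _ _ _ _ hap hp0 h0q hqr
      -- u*u - 0 = v*v - u*u  gives  d^2 - 6d + 1 = 0
      have hz : (d : ℚ) ^ 2 - 6 * (d : ℚ) + 1 = 0 := by
        rw [hu, hv] at key; linear_combination 4 * key
      have hzz : d ^ 2 - 6 * d + 1 = 0 := by exact_mod_cast hz
      exfalso
      rcases le_or_gt d 5 with h5 | h5
      · interval_cases d <;> norm_num at hzz
      · nlinarith
  subst hd3
  refine ⟨rfl, ?_, ?_⟩
  · rw [hA, hu, hv]; norm_num
  · rw [hB, hu, hv]; norm_num
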